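/- Let M be a symmetric irreducible real n×n matrix with positive diagonal, nonpositive off-diagonal entries, and zero row sums. Then the (n−1)×(n−1) submatrix M̃ obtained by deleting the first row and first column of M is symmetric positive definite. -/

import Mathlib

open Matrix

private lemma quad_key {n : ℕ} (M : Matrix (Fin n) (Fin n) ℝ)
    (hMsym : M.IsSymm) (hMrow : ∀ i, ∑ j, M i j = 0) (y : Fin n → ℝ) :
    2 * (y ⬝ᵥ M *ᵥ y) = ∑ i, ∑ j, (-M i j) * (y i - y j) ^ 2 := by
  have hcol : ∀ j, ∑ i, M i j = 0 := by
    intro j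
    have h : ∑ i, M i j = ∑ i, M j i :=
      Finset.sum_congr rfl fun i _ => hMsym.apply j i
    rw [h]; exact hMrow j
  have expand : ∀ i j, (-M i j) * (y i - y j) ^ 2 =
      2 * (M i j * (y i * y j)) - M i j * y i ^ 2 - M i j * y j ^ 2 := by
    intro i j; ring
  simp only [expand, Finset.sum_sub_distrib]
  have h1 : ∑ i : Fin n, ∑ j : Fin n, M i j * y i ^ 2 = 0 := by
    simp only [← Finset.sum_mul, hMrow, zero_mul, Finset.sum_const_zero]
  have h2 : ∑ i : Fin n, ∑ j : Fin n, M i j * y j ^ 2 = 0 := by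
    rw [Finset.sum_comm]
    simp only [← Finset.sum_mul, hcol, zero_mul, Finset.sum_const_zero]
  rw [h1, h2, sub_zero, sub_zero]
  simp only [dotProduct, mulVec, Finset.mul_sum]
  refine Finset.sum_congr rfl fun i _ => Finset.sum_congr rfl fun j _ => by ring

/-- the submatrix of M obtained by deleting the first row and column
is symmetric positive definite. -/
theorem mrmt_stmt2 {n : ℕ} (M : Matrix (Fin (n + 2)) (Fin (n + 2)) ℝ)
    (hMsym : M.IsSymm)
    (hMirr : ∀ i j : Fin (n + 2), i ≠ j → Relation.TransGen (fun a b => M a b ≠ 0) i j)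
    (hMdiag : ∀ i, 0 < M i i)
    (hMoff : ∀ i j, i ≠ j → M i j ≤ 0)
    (hMrow : ∀ i, ∑ j, M i j = 0) :
    (M.submatrix Fin.succ Fin.succ).PosDef := by
  have hHerm : (M.submatrix Fin.succ Fin.succ).IsHermitian := by
    ext i j
    simp [Matrix.conjTranspose, hMsym.apply]
  refine Matrix.PosDef.of_dotProduct_mulVec_pos hHerm fun x hx => ?_
  set y : Fin (n + 2) → ℝ := Fin.cons 0 x with hy
  have hy0 : y 0 = 0 := rfl
  have hform : x ⬝ᵥ (M.submatrix Fin.succ Fin.succ) *ᵥ x = y ⬝ᵥ M *ᵥ y := by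
    symm
    simp only [dotProduct, mulVec, Matrix.submatrix_apply, hy]
    rw [Fin.sum_univ_succ, Fin.cons_zero, zero_mul, zero_add]
    refine Finset.sum_congr rfl fun i _ => ?_
    rw [Fin.cons_succ]
    congr 1
    rw [Fin.sum_univ_succ, Fin.cons_zero, mul_zero, zero_add]
    simp [Fin.cons_succ]
  have hkey := quad_key M hMsym hMrow y
  have hnonneg : ∀ i ∈ Finset.univ, ∀ j ∈ (Finset.univ : Finset (Fin (n + 2))),
      0 ≤ (-M i j) * (y i - y j) ^ 2 := by
    intro i _ j _
    rcases eq_or_ne i j with rfl | hij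
    · simp
    · exact mul_nonneg (neg_nonneg.mpr (hMoff i j hij)) (sq_nonneg _)
  have hQnonneg : 0 ≤ y ⬝ᵥ M *ᵥ y := by
    nlinarith [Finset.sum_nonneg fun i (_ : i ∈ Finset.univ) =>
      Finset.sum_nonneg (hnonneg i (Finset.mem_univ i)), hkey]
  have hQne : y ⬝ᵥ M *ᵥ y ≠ 0 := by
    intro hQ
    have hsum0 : ∑ i, ∑ j, (-M i j) * (y i - y j) ^ 2 = 0 := by
      rw [← hkey, hQ, mul_zero]
    have hterm : ∀ i j, (-M i j) * (y i - y j) ^ 2 = 0 := by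
      intro i j
      have h1 := (Finset.sum_eq_zero_iff_of_nonneg (fun i hi =>
        Finset.sum_nonneg (hnonneg i hi))).mp hsum0 i (Finset.mem_univ i)
      exact (Finset.sum_eq_zero_iff_of_nonneg
        (hnonneg i (Finset.mem_univ i))).mp h1 j (Finset.mem_univ j)
    have hstep : ∀ a b : Fin (n + 2), M a b ≠ 0 → y a = y b := by
      intro a b hab
      have := hterm a b
      rcases mul_eq_zero.mp this with h | h
      · exact absurd (neg_eq_zero.mp h) hab
      · exact sub_eq_zero.mp ((pow_eq_zero_iff two_ne_zero).mp h)
    have hconst : ∀ a b : Fin (n + 2),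
        Relation.TransGen (fun a b => M a b ≠ 0) a b → y a = y b := by
      intro a b h
      induction h with
      | single h => exact hstep _ _ h
      | tail _ h ih => exact ih.trans (hstep _ _ h)
    have hx0 : x = 0 := by
      funext i
      have : y i.succ = y 0 := by
        rcases eq_or_ne (i.succ : Fin (n + 2)) 0 with h | h
        · rw [h]
        · exact hconst _ _ (hMirr i.succ 0 h)
      simpa [hy, Fin.cons_succ, Fin.cons_zero] using this
    exact hx hx0
  have : (0 : ℝ) < y ⬝ᵥ M *ᵥ y := lt_of_le_of_ne hQnonneg (Ne.symm hQne)
  simpa [hform] using this
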